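/- Let d₁ ≥ 1 be an integer, s > 0 and R > 0. Let E : (0,∞) → ℝ be twice differentiable and v : (0,∞) × [0,R] → ℝ be such that v, ∂_r v, ∂²_{rr} v, ∂_μ v, ∂²_{μr} v, ∂²_{μμ} v and ∂³_{μμr} v exist and are continuous, and for every μ > 0: v(μ,r) > 0 for r ∈ (0,R), v(μ,R) = 0, ∂_r v(μ,0) = 0, ∫₀^R v(μ,r)² r^{d₁-1} dr = 1, and −∂²_{rr} v(μ,r) − ((d₁−1)/r) ∂_r v(μ,r) + μ r^{2s} v(μ,r) = E(μ) v(μ,r) for all r ∈ (0,R). Then for every μ > 0, s E'(μ) + μ(1+s) E''(μ) ≥ 0. -/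

import Mathlib

open MeasureTheory Set Filter intervalIntegral
open Topology Interval

open MeasureTheory Set Filter intervalIntegral Topology Interval

lemma my_ftc {f f' : ℝ → ℝ} {a b : ℝ} (hab : a ≤ b) (hc : ContinuousOn f (Icc a b))
    (hd : ∀ x ∈ Ioo a b, HasDerivAt f (f' x) x) (hc' : ContinuousOn f' (Icc a b)) :
    ∫ y in a..b, f' y = f b - f a := by
  have hint : ContinuousOn f' (uIcc a b) := by rwa [uIcc_of_le hab]
  exact intervalIntegral.integral_eq_sub_of_hasDeriv_right_of_le hab hc
    (fun x hx => (hd x hx).hasDerivWithinAt) hint.intervalIntegrable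

lemma my_ftc1 {g : ℝ → ℝ} {a b r : ℝ} (hr : r ∈ Ioo a b) (hc : ContinuousOn g (Icc a b)) :
    HasDerivAt (fun ρ => ∫ t in a..ρ, g t) (g r) r := by
  have hsub : uIcc a r ⊆ Icc a b := by
    rw [uIcc_of_le hr.1.le]; exact Icc_subset_Icc le_rfl hr.2.le
  refine intervalIntegral.integral_hasDerivAt_right
    ((hc.mono hsub).intervalIntegrable) ?_ (hc.continuousAt (Icc_mem_nhds hr.1 hr.2))
  exact ⟨Ioo a b, Ioo_mem_nhds hr.1 hr.2,
    (hc.mono Ioo_subset_Icc_self).aestronglyMeasurable measurableSet_Ioo⟩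

lemma deriv_eq_zero_of_const {f : ℝ → ℝ} {f' x₀ c : ℝ} (hx₀ : 0 < x₀)
    (h : HasDerivAt f f' x₀) (hconst : ∀ m > (0:ℝ), f m = c) : f' = 0 := by
  have h2 : HasDerivAt (fun _ : ℝ => c) f' x₀ := by
    apply h.congr_of_eventuallyEq
    filter_upwards [isOpen_Ioi.mem_nhds hx₀] with m hm using (hconst m hm).symm
  exact h2.unique (hasDerivAt_const x₀ c)

lemma contOn_fix {F : ℝ → ℝ → ℝ} {S : Set ℝ} {m : ℝ} (hm : 0 < m)
    (hF : ContinuousOn (fun p : ℝ × ℝ => F p.1 p.2) (Ioi 0 ×ˢ S)) :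
    ContinuousOn (F m) S := by
  have : (F m) = (fun p : ℝ × ℝ => F p.1 p.2) ∘ (fun t => (m, t)) := rfl
  rw [this]
  exact hF.comp ((continuous_const.prodMk continuous_id).continuousOn)
    (fun t ht => ⟨hm, ht⟩)

lemma param_deriv {a b x₀ : ℝ} (hab : a ≤ b) (hx₀ : 0 < x₀) {F F' : ℝ → ℝ → ℝ}
    (hF : ContinuousOn (fun p : ℝ × ℝ => F p.1 p.2) (Ioi 0 ×ˢ Icc a b))
    (hF' : ContinuousOn (fun p : ℝ × ℝ => F' p.1 p.2) (Ioi 0 ×ˢ Icc a b))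
    (hd : ∀ m ∈ Ioi (0:ℝ), ∀ t ∈ Icc a b, HasDerivAt (fun m' => F m' t) (F' m t) m) :
    HasDerivAt (fun m => ∫ t in a..b, F m t) (∫ t in a..b, F' x₀ t) x₀ := by
  have hsub : (Icc (x₀/2) (3*x₀/2) ×ˢ Icc a b : Set (ℝ×ℝ)) ⊆ Ioi 0 ×ˢ Icc a b := by
    refine prod_mono ?_ subset_rfl
    intro x hx; exact lt_of_lt_of_le (by linarith) hx.1
  obtain ⟨C, hC⟩ := (isCompact_Icc.prod isCompact_Icc).exists_bound_of_continuousOn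
    (hF'.mono hsub)
  have hball : Metric.ball x₀ (x₀/2) ⊆ Icc (x₀/2) (3*x₀/2) := by
    intro x hx
    rw [Metric.mem_ball, Real.dist_eq, abs_lt] at hx
    constructor <;> linarith [hx.1, hx.2]
  have hball0 : Metric.ball x₀ (x₀/2) ⊆ Ioi (0:ℝ) := fun x hx =>
    lt_of_lt_of_le (by linarith) (hball hx).1
  have h1 : ∀ᶠ x in 𝓝 x₀, AEStronglyMeasurable (F x) (volume.restrict (Ι a b)) := by
    filter_upwards [isOpen_Ioi.mem_nhds hx₀] with m hm
    exact ((contOn_fix hm hF).mono (by rw [uIoc_of_le hab]; exact Ioc_subset_Icc_self)).aestronglyMeasurable measurableSet_uIoc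
  have h2 : IntervalIntegrable (F x₀) volume a b := by
    have : ContinuousOn (F x₀) (uIcc a b) := by rw [uIcc_of_le hab]; exact contOn_fix hx₀ hF
    exact this.intervalIntegrable
  have h3 : AEStronglyMeasurable (F' x₀) (volume.restrict (Ι a b)) :=
    ((contOn_fix hx₀ hF').mono (by rw [uIoc_of_le hab]; exact Ioc_subset_Icc_self)).aestronglyMeasurable measurableSet_uIoc
  have h4 : ∀ᵐ t ∂volume, t ∈ Ι a b → ∀ x ∈ Metric.ball x₀ (x₀/2), ‖F' x t‖ ≤ C := by
    apply ae_of_all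
    intro t ht x hx
    have ht' : t ∈ Icc a b := by
      rw [uIoc_of_le hab] at ht; exact Ioc_subset_Icc_self ht
    exact hC (x, t) ⟨hball hx, ht'⟩
  have h6 : ∀ᵐ t ∂volume, t ∈ Ι a b → ∀ x ∈ Metric.ball x₀ (x₀/2),
      HasDerivAt (fun m' => F m' t) (F' x t) x := by
    apply ae_of_all
    intro t ht x hx
    have ht' : t ∈ Icc a b := by
      rw [uIoc_of_le hab] at ht; exact Ioc_subset_Icc_self ht
    exact hd x (hball0 hx) t ht'
  exact (intervalIntegral.hasDerivAt_integral_of_dominated_loc_of_deriv_le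
    (Metric.ball_mem_nhds x₀ (half_pos hx₀)) h1 h2 h3 h4 intervalIntegrable_const h6).2
lemma clairaut1 {Rv : ℝ} {f fr fμ fμr : ℝ → ℝ → ℝ}
    (hcf : ContinuousOn (fun p : ℝ×ℝ => f p.1 p.2) (Ioi 0 ×ˢ Icc 0 Rv))
    (hcfr : ContinuousOn (fun p : ℝ×ℝ => fr p.1 p.2) (Ioi 0 ×ˢ Icc 0 Rv))
    (hcfμr : ContinuousOn (fun p : ℝ×ℝ => fμr p.1 p.2) (Ioi 0 ×ˢ Icc 0 Rv))
    (hfr : ∀ m > (0:ℝ), ∀ t ∈ Ioo 0 Rv, HasDerivAt (f m) (fr m t) t)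
    (hfμ : ∀ m > (0:ℝ), ∀ t ∈ Icc 0 Rv, HasDerivAt (fun m' => f m' t) (fμ m t) m)
    (hfμr : ∀ m > (0:ℝ), ∀ t ∈ Icc 0 Rv, HasDerivAt (fun m' => fr m' t) (fμr m t) m) :
    ∀ m > (0:ℝ), ∀ r ∈ Ioo 0 Rv, HasDerivAt (fμ m) (fμr m r) r := by
  intro m hm r hr
  have hRv : (0:ℝ) < Rv := hr.1.trans hr.2
  -- representation of fμ
  have rep : ∀ ρ ∈ Icc (0:ℝ) Rv, fμ m ρ = fμ m 0 + ∫ t in (0:ℝ)..ρ, fμr m t := by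
    intro ρ hρ
    have hsub : Icc (0:ℝ) ρ ⊆ Icc 0 Rv := Icc_subset_Icc le_rfl hρ.2
    have hsub2 : (Ioi 0 ×ˢ Icc (0:ℝ) ρ : Set (ℝ×ℝ)) ⊆ Ioi 0 ×ˢ Icc 0 Rv :=
      prod_mono subset_rfl hsub
    have repf : ∀ m' > (0:ℝ), f m' ρ = f m' 0 + ∫ t in (0:ℝ)..ρ, fr m' t := by
      intro m' hm'
      have := my_ftc (f := f m') (f' := fr m') hρ.1 ((contOn_fix hm' hcf).mono hsub)
        (fun x hx => hfr m' hm' x ⟨hx.1, lt_of_lt_of_le hx.2 hρ.2⟩)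
        ((contOn_fix hm' hcfr).mono hsub)
      linarith [this]
    have d1 : HasDerivAt (fun m' => f m' 0 + ∫ t in (0:ℝ)..ρ, fr m' t)
        (fμ m 0 + ∫ t in (0:ℝ)..ρ, fμr m t) m := by
      exact (hfμ m hm 0 (left_mem_Icc.2 hRv.le)).add
        (param_deriv hρ.1 hm (hcfr.mono hsub2) (hcfμr.mono hsub2)
          (fun m' hm' t ht => hfμr m' hm' t (hsub ht)))
    have d2 : HasDerivAt (fun m' => f m' ρ) (fμ m 0 + ∫ t in (0:ℝ)..ρ, fμr m t) m := by
      apply d1.congr_of_eventuallyEq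
      filter_upwards [isOpen_Ioi.mem_nhds hm] with m' hm' using (repf m' hm')
    exact (hfμ m hm ρ hρ).unique d2
  have key : HasDerivAt (fun ρ => fμ m 0 + ∫ t in (0:ℝ)..ρ, fμr m t) (fμr m r) r :=
    (my_ftc1 hr (contOn_fix hm hcfμr)).const_add (fμ m 0)
  apply key.congr_of_eventuallyEq
  filter_upwards [Ioo_mem_nhds hr.1 hr.2] with ρ hρ using rep ρ (Ioo_subset_Icc_self hρ)

lemma clairaut2 {r₁ r₂ : ℝ} (hr₁ : 0 < r₁) {f fμ A A' B B' : ℝ → ℝ → ℝ} {c c' : ℝ → ℝ}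
    (hcf : ContinuousOn (fun p : ℝ×ℝ => f p.1 p.2) (Ioi 0 ×ˢ Icc r₁ r₂))
    (hcA : ContinuousOn (fun p : ℝ×ℝ => A p.1 p.2) (Ioi 0 ×ˢ Icc r₁ r₂))
    (hcA' : ContinuousOn (fun p : ℝ×ℝ => A' p.1 p.2) (Ioi 0 ×ˢ Icc r₁ r₂))
    (hcB : ContinuousOn (fun p : ℝ×ℝ => B p.1 p.2) (Ioi 0 ×ˢ Icc r₁ r₂))
    (hcB' : ContinuousOn (fun p : ℝ×ℝ => B' p.1 p.2) (Ioi 0 ×ˢ Icc r₁ r₂))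
    (hfr : ∀ m > (0:ℝ), ∀ t ∈ Ioo r₁ r₂, HasDerivAt (f m) (A m t + c m * B m t) t)
    (hdA : ∀ m > (0:ℝ), ∀ t ∈ Icc r₁ r₂, HasDerivAt (fun m' => A m' t) (A' m t) m)
    (hdB : ∀ m > (0:ℝ), ∀ t ∈ Icc r₁ r₂, HasDerivAt (fun m' => B m' t) (B' m t) m)
    (hcd : ∀ m > (0:ℝ), HasDerivAt c (c' m) m)
    (hfμ : ∀ m > (0:ℝ), ∀ t ∈ Icc r₁ r₂, HasDerivAt (fun m' => f m' t) (fμ m t) m) :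
    ∀ m > (0:ℝ), ∀ r ∈ Ioo r₁ r₂,
      HasDerivAt (fμ m) (A' m r + (c' m * B m r + c m * B' m r)) r := by
  intro m hm r hr
  have h12 : r₁ ≤ r₂ := hr.1.le.trans hr.2.le
  have rep : ∀ ρ ∈ Icc r₁ r₂, fμ m ρ = fμ m r₁ + ((∫ t in r₁..ρ, A' m t)
      + ((c' m * ∫ t in r₁..ρ, B m t) + c m * ∫ t in r₁..ρ, B' m t)) := by
    intro ρ hρ
    have hsub : Icc r₁ ρ ⊆ Icc r₁ r₂ := Icc_subset_Icc le_rfl hρ.2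
    have hsub2 : (Ioi 0 ×ˢ Icc r₁ ρ : Set (ℝ×ℝ)) ⊆ Ioi 0 ×ˢ Icc r₁ r₂ :=
      prod_mono subset_rfl hsub
    have repf : ∀ m' > (0:ℝ), f m' ρ = f m' r₁
        + ((∫ t in r₁..ρ, A m' t) + c m' * ∫ t in r₁..ρ, B m' t) := by
      intro m' hm'
      have hintA : ContinuousOn (A m') (Icc r₁ ρ) := (contOn_fix hm' hcA).mono hsub
      have hintB : ContinuousOn (B m') (Icc r₁ ρ) := (contOn_fix hm' hcB).mono hsub
      have hint : ContinuousOn (fun t => A m' t + c m' * B m' t) (Icc r₁ ρ) :=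
        hintA.add (continuousOn_const.mul hintB)
      have hft := my_ftc (f := f m') (f' := fun t => A m' t + c m' * B m' t) hρ.1
        ((contOn_fix hm' hcf).mono hsub)
        (fun x hx => hfr m' hm' x ⟨hx.1, lt_of_lt_of_le hx.2 hρ.2⟩) hint
      have hiA : IntervalIntegrable (A m') volume r₁ ρ := by
        have : ContinuousOn (A m') (uIcc r₁ ρ) := by rwa [uIcc_of_le hρ.1]
        exact this.intervalIntegrable
      have hiB : IntervalIntegrable (fun t => c m' * B m' t) volume r₁ ρ := by
        have : ContinuousOn (fun t => c m' * B m' t) (uIcc r₁ ρ) := by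
          rw [uIcc_of_le hρ.1]; exact continuousOn_const.mul hintB
        exact this.intervalIntegrable
      rw [intervalIntegral.integral_add hiA hiB, intervalIntegral.integral_const_mul] at hft
      linarith [hft]
    have d1 : HasDerivAt (fun m' => f m' r₁ + ((∫ t in r₁..ρ, A m' t)
        + c m' * ∫ t in r₁..ρ, B m' t))
        (fμ m r₁ + ((∫ t in r₁..ρ, A' m t)
          + ((c' m * ∫ t in r₁..ρ, B m t) + c m * ∫ t in r₁..ρ, B' m t))) m := by
      refine (hfμ m hm r₁ (left_mem_Icc.2 h12)).add (HasDerivAt.add ?_ ?_)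
      · exact param_deriv hρ.1 hm (hcA.mono hsub2) (hcA'.mono hsub2)
          (fun m' hm' t ht => hdA m' hm' t (hsub ht))
      · exact (hcd m hm).mul (param_deriv hρ.1 hm (hcB.mono hsub2) (hcB'.mono hsub2)
          (fun m' hm' t ht => hdB m' hm' t (hsub ht)))
    have d2 : HasDerivAt (fun m' => f m' ρ)
        (fμ m r₁ + ((∫ t in r₁..ρ, A' m t)
          + ((c' m * ∫ t in r₁..ρ, B m t) + c m * ∫ t in r₁..ρ, B' m t))) m := by
      apply d1.congr_of_eventuallyEq
      filter_upwards [isOpen_Ioi.mem_nhds hm] with m' hm' using (repf m' hm')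
    exact (hfμ m hm ρ hρ).unique d2
  have key : HasDerivAt (fun ρ => fμ m r₁ + ((∫ t in r₁..ρ, A' m t)
      + ((c' m * ∫ t in r₁..ρ, B m t) + c m * ∫ t in r₁..ρ, B' m t)))
      (A' m r + (c' m * B m r + c m * B' m r)) r := by
    have k1 : HasDerivAt (fun ρ => ∫ t in r₁..ρ, A' m t) (A' m r) r :=
      my_ftc1 hr (contOn_fix hm hcA')
    have k2 : HasDerivAt (fun ρ => ∫ t in r₁..ρ, B m t) (B m r) r :=
      my_ftc1 hr (contOn_fix hm hcB)
    have k3 : HasDerivAt (fun ρ => ∫ t in r₁..ρ, B' m t) (B' m r) r :=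
      my_ftc1 hr (contOn_fix hm hcB')
    exact ((k1.add ((k2.const_mul (c' m)).add (k3.const_mul (c m)))).const_add (fμ m r₁))
  apply key.congr_of_eventuallyEq
  filter_upwards [Ioo_mem_nhds hr.1 hr.2] with ρ hρ using rep ρ (Ioo_subset_Icc_self hρ)
lemma cheb {b p : ℝ} (hp : 0 < p) {V W : ℝ → ℝ}
    (hV : ∀ r ∈ Ioo (0:ℝ) b, 0 < V r)
    (hmono : MonotoneOn (fun r => W r / V r) (Ioo (0:ℝ) b)) :
    ∃ c : ℝ, 0 ≤ c ∧ ∀ r ∈ Ioo (0:ℝ) b, 0 ≤ (r ^ p - c ^ p) * (V r * W r) := by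
  by_cases hne : ∃ r ∈ Ioo (0:ℝ) b, W r ≤ 0
  · set S : Set ℝ := {r | r ∈ Ioo (0:ℝ) b ∧ W r ≤ 0} with hS
    have hSne : S.Nonempty := by obtain ⟨r, hr, hw⟩ := hne; exact ⟨r, hr, hw⟩
    have hbdd : BddAbove S := ⟨b, fun x hx => hx.1.2.le⟩
    obtain ⟨r', hr'⟩ := id hSne
    refine ⟨sSup S, le_trans hr'.1.1.le (le_csSup hbdd hr'), ?_⟩
    intro r hr
    rcases le_or_gt (W r) 0 with hw | hw
    · -- r ≤ sSup S
      have h1 : r ≤ sSup S := le_csSup hbdd ⟨hr, hw⟩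
      have h2 : r ^ p ≤ (sSup S) ^ p := Real.rpow_le_rpow hr.1.le h1 hp.le
      have h3 : V r * W r ≤ 0 := mul_nonpos_of_nonneg_of_nonpos (hV r hr).le hw
      nlinarith [h2, h3]
    · -- sSup S ≤ r
      have h1 : sSup S ≤ r := by
        apply csSup_le hSne
        intro x hx
        by_contra hlt
        push_neg at hlt
        have : W x / V x ≤ 0 := div_nonpos_of_nonpos_of_nonneg hx.2 (hV x hx.1).le
        have h4 : W r / V r ≤ W x / V x := hmono hr hx.1 hlt.le
        have h5 : 0 < W r / V r := div_pos hw (hV r hr)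
        linarith
      have h0S : 0 ≤ sSup S := le_trans hr'.1.1.le (le_csSup hbdd hr')
      have h2 : (sSup S) ^ p ≤ r ^ p := Real.rpow_le_rpow h0S h1 hp.le
      have h3 : 0 ≤ V r * W r := (mul_pos (hV r hr) hw).le
      exact mul_nonneg (by linarith) h3
  · push_neg at hne
    refine ⟨0, le_rfl, ?_⟩
    intro r hr
    rw [Real.zero_rpow hp.ne']
    have := hne r hr
    have hPr : 0 ≤ r ^ p := Real.rpow_nonneg hr.1.le p
    exact mul_nonneg (by linarith) (mul_nonneg (hV r hr).le (this.le))

set_option maxHeartbeats 2000000 in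
/-- for a family `v(μ,·)` of positive normalized radial Dirichlet
eigenfunctions of `-Δ + μ r^{2s}` on the ball of radius `R` in `ℝ^{d₁}` with first
eigenvalue `E(μ)`, twice differentiable in `μ`, one has
`s E'(μ) + μ(1+s) E''(μ) ≥ 0` for all `μ > 0`. -/
theorem sE1dot_plus_muE1ddot_nonneg (d₁ : ℕ) (hd₁ : 1 ≤ d₁) (s R : ℝ) (hs : 0 < s) (hR : 0 < R)
    (E E' E'' : ℝ → ℝ) (v vr vrr vμ vμr vμμ vμμr : ℝ → ℝ → ℝ)
    (hE : ∀ μ > (0:ℝ), HasDerivAt E (E' μ) μ)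
    (hE' : ∀ μ > (0:ℝ), HasDerivAt E' (E'' μ) μ)
    (hvr : ∀ μ > (0:ℝ), ∀ r ∈ Set.Icc 0 R, HasDerivWithinAt (v μ) (vr μ r) (Set.Icc 0 R) r)
    (hvrr : ∀ μ > (0:ℝ), ∀ r ∈ Set.Icc 0 R, HasDerivWithinAt (vr μ) (vrr μ r) (Set.Icc 0 R) r)
    (hvμ : ∀ μ > (0:ℝ), ∀ r ∈ Set.Icc 0 R, HasDerivAt (fun m => v m r) (vμ μ r) μ)
    (hvμr : ∀ μ > (0:ℝ), ∀ r ∈ Set.Icc 0 R, HasDerivAt (fun m => vr m r) (vμr μ r) μ)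
    (hvμμ : ∀ μ > (0:ℝ), ∀ r ∈ Set.Icc 0 R, HasDerivAt (fun m => vμ m r) (vμμ μ r) μ)
    (hvμμr : ∀ μ > (0:ℝ), ∀ r ∈ Set.Icc 0 R, HasDerivAt (fun m => vμr m r) (vμμr μ r) μ)
    (hcv : ContinuousOn (fun p : ℝ × ℝ => v p.1 p.2) (Set.Ioi 0 ×ˢ Set.Icc 0 R))
    (hcvr : ContinuousOn (fun p : ℝ × ℝ => vr p.1 p.2) (Set.Ioi 0 ×ˢ Set.Icc 0 R))
    (hcvrr : ContinuousOn (fun p : ℝ × ℝ => vrr p.1 p.2) (Set.Ioi 0 ×ˢ Set.Icc 0 R))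
    (hcvμ : ContinuousOn (fun p : ℝ × ℝ => vμ p.1 p.2) (Set.Ioi 0 ×ˢ Set.Icc 0 R))
    (hcvμr : ContinuousOn (fun p : ℝ × ℝ => vμr p.1 p.2) (Set.Ioi 0 ×ˢ Set.Icc 0 R))
    (hcvμμ : ContinuousOn (fun p : ℝ × ℝ => vμμ p.1 p.2) (Set.Ioi 0 ×ˢ Set.Icc 0 R))
    (hcvμμr : ContinuousOn (fun p : ℝ × ℝ => vμμr p.1 p.2) (Set.Ioi 0 ×ˢ Set.Icc 0 R))
    (hvpos : ∀ μ > (0:ℝ), ∀ r ∈ Set.Ioo 0 R, 0 < v μ r)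
    (hbcR : ∀ μ > (0:ℝ), v μ R = 0)
    (hbc0 : ∀ μ > (0:ℝ), vr μ 0 = 0)
    (hnorm : ∀ μ > (0:ℝ), ∫ r in (0:ℝ)..R, (v μ r) ^ 2 * r ^ (d₁ - 1) = 1)
    (hode : ∀ μ > (0:ℝ), ∀ r ∈ Set.Ioo 0 R,
      -(vrr μ r) - (((d₁ : ℝ) - 1) / r) * vr μ r + μ * r ^ (2 * s) * v μ r = E μ * v μ r) :
    ∀ μ > (0:ℝ), 0 ≤ s * E' μ + μ * (1 + s) * E'' μ := by
  intro μ hμ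
  have hs1 : (0:ℝ) < 1 + s := by linarith
  have h2s : (0:ℝ) < 2 * s := by linarith
  have hd1R : (1:ℝ) ≤ (d₁:ℝ) := by exact_mod_cast hd₁
  have hIoo : Ioo (0:ℝ) R ⊆ Icc 0 R := Ioo_subset_Icc_self
  have intCC : ∀ f : ℝ → ℝ, ContinuousOn f (Icc 0 R) → IntervalIntegrable f volume 0 R :=
    fun f h => ContinuousOn.intervalIntegrable (by rwa [uIcc_of_le hR.le])
  -- continuity of slices
  have cV : ContinuousOn (fun r => v μ r) (Icc 0 R) := contOn_fix hμ hcv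
  have cVr : ContinuousOn (fun r => vr μ r) (Icc 0 R) := contOn_fix hμ hcvr
  have cVrr : ContinuousOn (fun r => vrr μ r) (Icc 0 R) := contOn_fix hμ hcvrr
  have cVμ : ContinuousOn (fun r => vμ μ r) (Icc 0 R) := contOn_fix hμ hcvμ
  have cVμr : ContinuousOn (fun r => vμr μ r) (Icc 0 R) := contOn_fix hμ hcvμr
  have cVμμ : ContinuousOn (fun r => vμμ μ r) (Icc 0 R) := contOn_fix hμ hcvμμ
  have cVμμr : ContinuousOn (fun r => vμμr μ r) (Icc 0 R) := contOn_fix hμ hcvμμr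
  have cP : ContinuousOn (fun r : ℝ => r ^ (2*s)) (Icc 0 R) := fun x _ =>
    (Real.continuousAt_rpow_const x (2*s) (Or.inr h2s.le)).continuousWithinAt
  have cX : ContinuousOn (fun r : ℝ => r ^ (d₁-1)) (Icc 0 R) :=
    (continuous_pow (d₁-1)).continuousOn
  -- boundary values of μ-derivatives
  have z1 : ∀ m > (0:ℝ), vμ m R = 0 := fun m hm =>
    deriv_eq_zero_of_const hm (hvμ m hm R (right_mem_Icc.2 hR.le)) hbcR
  have z2 : ∀ m > (0:ℝ), vμr m 0 = 0 := fun m hm =>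
    deriv_eq_zero_of_const hm (hvμr m hm 0 (left_mem_Icc.2 hR.le)) hbc0
  have z3 : vμμ μ R = 0 :=
    deriv_eq_zero_of_const hμ (hvμμ μ hμ R (right_mem_Icc.2 hR.le)) z1
  have z4 : vμμr μ 0 = 0 :=
    deriv_eq_zero_of_const hμ (hvμμr μ hμ 0 (left_mem_Icc.2 hR.le)) z2
  -- rearranged ODE
  have ode' : ∀ m > (0:ℝ), ∀ r ∈ Ioo (0:ℝ) R,
      vrr m r = -(((d₁:ℝ)-1)/r) * vr m r + (m * r^(2*s) - E m) * v m r := by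
    intro m hm r hr
    linear_combination - hode m hm r hr
  -- power identities
  have hpow1 : ∀ r : ℝ, r^d₁ = r^(d₁-1) * r := by
    intro r
    conv_lhs => rw [show d₁ = (d₁-1)+1 from (Nat.succ_pred_eq_of_pos hd₁).symm]
    rw [pow_succ]
  have hpow3 : ∀ r : ℝ, r ≠ 0 → ((d₁-1:ℕ):ℝ) * r^(d₁-1-1) = ((d₁:ℝ)-1) * r^(d₁-1) / r := by
    intro r hrne
    rcases Nat.lt_or_ge d₁ 2 with h2 | h2
    · have : d₁ = 1 := le_antisymm (by omega) hd₁
      subst this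
      simp
    · have h1 : d₁ - 1 = (d₁-1-1) + 1 := by omega
      have h4 : ((d₁-1:ℕ):ℝ) = (d₁:ℝ) - 1 := by
        rw [Nat.cast_sub hd₁, Nat.cast_one]
      rw [h4]
      conv_rhs => rw [h1, pow_succ]
      field_simp
  -- r-derivatives at interior points
  have dV : ∀ m > (0:ℝ), ∀ r ∈ Ioo (0:ℝ) R, HasDerivAt (v m) (vr m r) r :=
    fun m hm r hr => (hvr m hm r (hIoo hr)).hasDerivAt (Icc_mem_nhds hr.1 hr.2)
  have dVr : ∀ m > (0:ℝ), ∀ r ∈ Ioo (0:ℝ) R, HasDerivAt (vr m) (vrr m r) r :=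
    fun m hm r hr => (hvrr m hm r (hIoo hr)).hasDerivAt (Icc_mem_nhds hr.1 hr.2)
  -- Clairaut: r-derivative of vμ is vμr
  have F1 : ∀ m > (0:ℝ), ∀ r ∈ Ioo (0:ℝ) R, HasDerivAt (vμ m) (vμr m r) r :=
    clairaut1 hcv hcvr hcvμr dV hvμ hvμr
  -- Clairaut: r-derivative of vμμ is vμμr
  have F3 : ∀ m > (0:ℝ), ∀ r ∈ Ioo (0:ℝ) R, HasDerivAt (vμμ m) (vμμr m r) r :=
    clairaut1 hcvμ hcvμr hcvμμr F1 hvμμ hvμμr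
  -- Clairaut with ODE substitution: r-derivative of vμr
  have F2 : ∀ m > (0:ℝ), ∀ r ∈ Ioo (0:ℝ) R, HasDerivAt (vμr m)
      (-(((d₁:ℝ)-1)/r) * vμr m r + (r^(2*s) - E' m) * v m r
        + (m*r^(2*s) - E m) * vμ m r) r := by
    intro m hm r hr
    have h1 : 0 < r/2 := by linarith [hr.1]
    have h2 : (r+R)/2 < R := by linarith [hr.2]
    have h3 : r/2 < r := by linarith [hr.1]
    have h4 : r < (r+R)/2 := by linarith [hr.2]
    have hsubIcc : Icc (r/2) ((r+R)/2) ⊆ Icc 0 R :=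
      Icc_subset_Icc (by linarith) (by linarith)
    have hsubIoo : Icc (r/2) ((r+R)/2) ⊆ Ioo 0 R := fun x hx =>
      ⟨lt_of_lt_of_le h1 hx.1, lt_of_le_of_lt hx.2 h2⟩
    have hsubP : (Ioi 0 ×ˢ Icc (r/2) ((r+R)/2) : Set (ℝ×ℝ)) ⊆ Ioi 0 ×ˢ Icc 0 R :=
      prod_mono subset_rfl hsubIcc
    have cInv : ContinuousOn (fun p : ℝ×ℝ => -(((d₁:ℝ)-1)/p.2))
        (Ioi 0 ×ˢ Icc (r/2) ((r+R)/2)) := by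
      apply ContinuousOn.neg
      exact ContinuousOn.div continuousOn_const continuous_snd.continuousOn
        (fun p hp => ne_of_gt (lt_of_lt_of_le h1 hp.2.1))
    have cPP : ContinuousOn (fun p : ℝ×ℝ => p.2^(2*s))
        (Ioi 0 ×ˢ Icc (r/2) ((r+R)/2)) := fun p _ =>
      ((Real.continuousAt_rpow_const p.2 (2*s) (Or.inr h2s.le)).comp
        continuous_snd.continuousAt).continuousWithinAt
    have cEm : ContinuousOn (fun p : ℝ×ℝ => E p.1) (Ioi 0 ×ˢ Icc (r/2) ((r+R)/2)) :=
      fun p hp => (((hE p.1 hp.1).continuousAt).comp continuous_fst.continuousAt).continuousWithinAt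
    have cE'm : ContinuousOn (fun p : ℝ×ℝ => E' p.1) (Ioi 0 ×ˢ Icc (r/2) ((r+R)/2)) :=
      fun p hp => (((hE' p.1 hp.1).continuousAt).comp continuous_fst.continuousAt).continuousWithinAt
    have cA : ContinuousOn (fun p : ℝ×ℝ => -(((d₁:ℝ)-1)/p.2) * vr p.1 p.2
        + (p.1*p.2^(2*s) - E p.1) * v p.1 p.2) (Ioi 0 ×ˢ Icc (r/2) ((r+R)/2)) :=
      (cInv.mul (hcvr.mono hsubP)).add
        (((continuous_fst.continuousOn.mul cPP).sub cEm).mul (hcv.mono hsubP))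
    have cA' : ContinuousOn (fun p : ℝ×ℝ => -(((d₁:ℝ)-1)/p.2) * vμr p.1 p.2
        + (p.2^(2*s) - E' p.1) * v p.1 p.2 + (p.1*p.2^(2*s) - E p.1) * vμ p.1 p.2)
        (Ioi 0 ×ˢ Icc (r/2) ((r+R)/2)) :=
      ((cInv.mul (hcvμr.mono hsubP)).add
        ((cPP.sub cE'm).mul (hcv.mono hsubP))).add
        (((continuous_fst.continuousOn.mul cPP).sub cEm).mul (hcvμ.mono hsubP))
    have happ := clairaut2 (r₁ := r/2) (r₂ := (r+R)/2) h1 (f := vr) (fμ := vμr)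
      (A := fun m t => -(((d₁:ℝ)-1)/t) * vr m t + (m*t^(2*s) - E m) * v m t)
      (A' := fun m t => -(((d₁:ℝ)-1)/t) * vμr m t + (t^(2*s) - E' m) * v m t
        + (m*t^(2*s) - E m) * vμ m t)
      (B := fun _ _ => 0) (B' := fun _ _ => 0) (c := fun _ => 0) (c' := fun _ => 0)
      (hcvr.mono hsubP) cA cA' continuousOn_const continuousOn_const
      (fun m' hm' t ht => by
        have hD := dVr m' hm' t (hsubIoo (Ioo_subset_Icc_self ht))
        have : vrr m' t = -(((d₁:ℝ)-1)/t) * vr m' t + (m'*t^(2*s) - E m') * v m' t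
            + (fun _ : ℝ => (0:ℝ)) m' * (fun _ : ℝ => (0:ℝ)) t := by
          rw [ode' m' hm' t (hsubIoo (Ioo_subset_Icc_self ht))]; ring
        rw [this] at hD
        exact hD)
      (fun m' hm' t ht => by
        have e1 : HasDerivAt (fun m'' => -(((d₁:ℝ)-1)/t) * vr m'' t)
            (-(((d₁:ℝ)-1)/t) * vμr m' t) m' :=
          (hvμr m' hm' t (hsubIcc ht)).const_mul _
        have e2 : HasDerivAt (fun m'' => m''*t^(2*s) - E m'') (t^(2*s) - E' m') m' :=
          (hasDerivAt_mul_const (t^(2*s))).sub (hE m' hm')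
        have e3 := e2.mul (hvμ m' hm' t (hsubIcc ht))
        have := e1.add e3
        refine this.congr_deriv ?_
        ring)
      (fun m' hm' t ht => hasDerivAt_const m' 0)
      (fun m' hm' => hasDerivAt_const m' 0)
      (fun m' hm' t ht => hvμr m' hm' t (hsubIcc ht))
    have := happ m hm r ⟨h3, h4⟩
    convert this using 1
    ring
  -- Clairaut: r-derivative of vμμr
  have F4 : ∀ r ∈ Ioo (0:ℝ) R, HasDerivAt (vμμr μ)
      (-(((d₁:ℝ)-1)/r) * vμμr μ r - E'' μ * v μ r + 2*(r^(2*s) - E' μ) * vμ μ r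
        + (μ*r^(2*s) - E μ) * vμμ μ r) r := by
    intro r hr
    have h1 : 0 < r/2 := by linarith [hr.1]
    have h2 : (r+R)/2 < R := by linarith [hr.2]
    have h3 : r/2 < r := by linarith [hr.1]
    have h4 : r < (r+R)/2 := by linarith [hr.2]
    have hsubIcc : Icc (r/2) ((r+R)/2) ⊆ Icc 0 R :=
      Icc_subset_Icc (by linarith) (by linarith)
    have hsubIoo : Icc (r/2) ((r+R)/2) ⊆ Ioo 0 R := fun x hx =>
      ⟨lt_of_lt_of_le h1 hx.1, lt_of_le_of_lt hx.2 h2⟩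
    have hsubP : (Ioi 0 ×ˢ Icc (r/2) ((r+R)/2) : Set (ℝ×ℝ)) ⊆ Ioi 0 ×ˢ Icc 0 R :=
      prod_mono subset_rfl hsubIcc
    have cInv : ContinuousOn (fun p : ℝ×ℝ => -(((d₁:ℝ)-1)/p.2))
        (Ioi 0 ×ˢ Icc (r/2) ((r+R)/2)) := by
      apply ContinuousOn.neg
      exact ContinuousOn.div continuousOn_const continuous_snd.continuousOn
        (fun p hp => ne_of_gt (lt_of_lt_of_le h1 hp.2.1))
    have cPP : ContinuousOn (fun p : ℝ×ℝ => p.2^(2*s))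
        (Ioi 0 ×ˢ Icc (r/2) ((r+R)/2)) := fun p _ =>
      ((Real.continuousAt_rpow_const p.2 (2*s) (Or.inr h2s.le)).comp
        continuous_snd.continuousAt).continuousWithinAt
    have cEm : ContinuousOn (fun p : ℝ×ℝ => E p.1) (Ioi 0 ×ˢ Icc (r/2) ((r+R)/2)) :=
      fun p hp => (((hE p.1 hp.1).continuousAt).comp continuous_fst.continuousAt).continuousWithinAt
    have cE'm : ContinuousOn (fun p : ℝ×ℝ => E' p.1) (Ioi 0 ×ˢ Icc (r/2) ((r+R)/2)) :=
      fun p hp => (((hE' p.1 hp.1).continuousAt).comp continuous_fst.continuousAt).continuousWithinAt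
    have cA : ContinuousOn (fun p : ℝ×ℝ => -(((d₁:ℝ)-1)/p.2) * vμr p.1 p.2
        + p.2^(2*s) * v p.1 p.2 + (p.1*p.2^(2*s) - E p.1) * vμ p.1 p.2)
        (Ioi 0 ×ˢ Icc (r/2) ((r+R)/2)) :=
      ((cInv.mul (hcvμr.mono hsubP)).add (cPP.mul (hcv.mono hsubP))).add
        (((continuous_fst.continuousOn.mul cPP).sub cEm).mul (hcvμ.mono hsubP))
    have cA' : ContinuousOn (fun p : ℝ×ℝ => -(((d₁:ℝ)-1)/p.2) * vμμr p.1 p.2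
        + p.2^(2*s) * vμ p.1 p.2 + ((p.2^(2*s) - E' p.1) * vμ p.1 p.2
          + (p.1*p.2^(2*s) - E p.1) * vμμ p.1 p.2))
        (Ioi 0 ×ˢ Icc (r/2) ((r+R)/2)) :=
      ((cInv.mul (hcvμμr.mono hsubP)).add (cPP.mul (hcvμ.mono hsubP))).add
        (((cPP.sub cE'm).mul (hcvμ.mono hsubP)).add
          (((continuous_fst.continuousOn.mul cPP).sub cEm).mul (hcvμμ.mono hsubP)))
    have happ := clairaut2 (r₁ := r/2) (r₂ := (r+R)/2) h1 (f := vμr) (fμ := vμμr)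
      (A := fun m t => -(((d₁:ℝ)-1)/t) * vμr m t + t^(2*s) * v m t
        + (m*t^(2*s) - E m) * vμ m t)
      (A' := fun m t => -(((d₁:ℝ)-1)/t) * vμμr m t + t^(2*s) * vμ m t
        + ((t^(2*s) - E' m) * vμ m t + (m*t^(2*s) - E m) * vμμ m t))
      (B := fun m t => -(v m t)) (B' := fun m t => -(vμ m t)) (c := E') (c' := E'')
      (hcvμr.mono hsubP) cA cA' (hcv.mono hsubP).neg (hcvμ.mono hsubP).neg
      (fun m' hm' t ht => by
        have hD := F2 m' hm' t (hsubIoo (Ioo_subset_Icc_self ht))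
        convert hD using 1
        ring)
      (fun m' hm' t ht => by
        have e1 : HasDerivAt (fun m'' => -(((d₁:ℝ)-1)/t) * vμr m'' t)
            (-(((d₁:ℝ)-1)/t) * vμμr m' t) m' :=
          (hvμμr m' hm' t (hsubIcc ht)).const_mul _
        have e1b : HasDerivAt (fun m'' => t^(2*s) * v m'' t) (t^(2*s) * vμ m' t) m' :=
          (hvμ m' hm' t (hsubIcc ht)).const_mul _
        have e2 : HasDerivAt (fun m'' => m''*t^(2*s) - E m'') (t^(2*s) - E' m') m' :=
          (hasDerivAt_mul_const (t^(2*s))).sub (hE m' hm')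
        exact (e1.add e1b).add (e2.mul (hvμμ m' hm' t (hsubIcc ht))))
      (fun m' hm' t ht => (hvμ m' hm' t (hsubIcc ht)).neg)
      (fun m' hm' => hE' m' hm')
      (fun m' hm' t ht => hvμμr m' hm' t (hsubIcc ht))
    have := happ μ hμ r ⟨h3, h4⟩
    convert this using 1
    ring
  -- second r-derivative of v μ, via the ODE
  have dVrr2 : ∀ r ∈ Ioo (0:ℝ) R, HasDerivAt (vrr μ)
      (((d₁:ℝ)-1)/r^2 * vr μ r - (((d₁:ℝ)-1)/r) * vrr μ r
        + μ*(2*s)*(r^(2*s)/r) * v μ r + (μ*r^(2*s) - E μ) * vr μ r) r := by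
    intro r hr
    have g1 : HasDerivAt (fun x : ℝ => -((d₁:ℝ)-1) * x⁻¹)
        (-((d₁:ℝ)-1) * -(((r:ℝ)^2)⁻¹)) r := (hasDerivAt_inv hr.1.ne').const_mul _
    have g2 := g1.mul (dVr μ hμ r hr)
    have g3 : HasDerivAt (fun x : ℝ => μ*x^(2*s) - E μ)
        (μ*(2*s*r^(2*s-1))) r := by
      simpa using ((Real.hasDerivAt_rpow_const (p := 2*s) (Or.inl hr.1.ne')).const_mul μ).sub_const (E μ)
    have g4 := g3.mul (dV μ hμ r hr)
    have hfun := g2.add g4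
    have heq : (vrr μ) =ᶠ[𝓝 r]
        (fun x => -((d₁:ℝ)-1) * x⁻¹ * vr μ x + (μ*x^(2*s) - E μ) * v μ x) := by
      filter_upwards [Ioo_mem_nhds hr.1 hr.2] with x hx
      rw [ode' μ hμ x hx]; ring
    have hD := hfun.congr_of_eventuallyEq heq
    refine hD.congr_deriv ?_
    rw [Real.rpow_sub hr.1, Real.rpow_one]
    have hrne : r ≠ 0 := hr.1.ne'
    field_simp
    ring
  have Inorm := hnorm μ hμ
  -- orthogonality from differentiating the normalization
  have I1 : ∫ r in (0:ℝ)..R, v μ r * vμ μ r * r^(d₁-1) = 0 := by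
    have hdI : HasDerivAt (fun m => ∫ t in (0:ℝ)..R, (v m t)^2 * t^(d₁-1))
        (∫ t in (0:ℝ)..R, 2*(v μ t * vμ μ t * t^(d₁-1))) μ := by
      apply param_deriv (F := fun m t => (v m t)^2 * t^(d₁-1))
        (F' := fun m t => 2*(v m t * vμ m t * t^(d₁-1))) hR.le hμ
      · exact (hcv.pow 2).mul ((continuous_snd.pow (d₁-1)).continuousOn)
      · exact continuousOn_const.mul ((hcv.mul hcvμ).mul
          ((continuous_snd.pow (d₁-1)).continuousOn))
      · intro m hm t ht
        have h1 := ((hvμ m hm t ht).pow 2).mul_const (t^(d₁-1))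
        refine h1.congr_deriv ?_
        ring
    have hz := deriv_eq_zero_of_const hμ hdI hnorm
    rw [intervalIntegral.integral_const_mul] at hz
    linarith [hz]
  -- Feynman-Hellmann
  have I2 : ∫ r in (0:ℝ)..R, r^(2*s) * (v μ r)^2 * r^(d₁-1) = E' μ := by
    have KC : ContinuousOn (fun r => r^(d₁-1) * (v μ r * vμr μ r - vr μ r * vμ μ r)) (Icc 0 R) :=
      cX.mul ((cV.mul cVμr).sub (cVr.mul cVμ))
    have Kd : ∀ r ∈ Ioo (0:ℝ) R,
        HasDerivAt (fun r => r^(d₁-1) * (v μ r * vμr μ r - vr μ r * vμ μ r))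
        (r^(2*s) * (v μ r)^2 * r^(d₁-1) - E' μ * ((v μ r)^2 * r^(d₁-1))) r := by
      intro r hr
      have hcomb := (hasDerivAt_pow (d₁-1) r).mul
        (((dV μ hμ r hr).mul (F2 μ hμ r hr)).sub ((dVr μ hμ r hr).mul (F1 μ hμ r hr)))
      refine hcomb.congr_deriv ?_
      rw [hpow3 r hr.1.ne', ode' μ hμ r hr]
      simp only [Pi.mul_apply, Pi.sub_apply, Pi.add_apply, Pi.pow_apply]
      field_simp
      ring
    have hK := my_ftc hR.le KC Kd
      (((cP.mul (cV.pow 2)).mul cX).sub (continuousOn_const.mul ((cV.pow 2).mul cX)))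
    have hKR : R^(d₁-1) * (v μ R * vμr μ R - vr μ R * vμ μ R) = 0 := by
      rw [hbcR μ hμ, z1 μ hμ]; ring
    have hK0 : (0:ℝ)^(d₁-1) * (v μ 0 * vμr μ 0 - vr μ 0 * vμ μ 0) = 0 := by
      rw [hbc0 μ hμ, z2 μ hμ]; ring
    rw [hKR, hK0, sub_zero] at hK
    rw [intervalIntegral.integral_sub (intCC (fun r => r^(2*s) * (v μ r)^2 * r^(d₁-1)) ((cP.mul (cV.pow 2)).mul cX))
      (intCC (fun r => E' μ * ((v μ r)^2 * r^(d₁-1))) (continuousOn_const.mul ((cV.pow 2).mul cX))),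
      intervalIntegral.integral_const_mul, Inorm] at hK
    linarith [hK]
  -- second derivative identity
  have I3 : ∫ r in (0:ℝ)..R, r^(2*s) * (v μ r * vμ μ r) * r^(d₁-1) = E'' μ / 2 := by
    have KC : ContinuousOn (fun r => r^(d₁-1) * (v μ r * vμμr μ r - vr μ r * vμμ μ r)) (Icc 0 R) :=
      cX.mul ((cV.mul cVμμr).sub (cVr.mul cVμμ))
    have Kd : ∀ r ∈ Ioo (0:ℝ) R,
        HasDerivAt (fun r => r^(d₁-1) * (v μ r * vμμr μ r - vr μ r * vμμ μ r))
        (2*(r^(2*s) * (v μ r * vμ μ r) * r^(d₁-1)) - 2*E' μ * (v μ r * vμ μ r * r^(d₁-1))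
          - E'' μ * ((v μ r)^2 * r^(d₁-1))) r := by
      intro r hr
      have hcomb := (hasDerivAt_pow (d₁-1) r).mul
        (((dV μ hμ r hr).mul (F4 r hr)).sub ((dVr μ hμ r hr).mul (F3 μ hμ r hr)))
      refine hcomb.congr_deriv ?_
      rw [hpow3 r hr.1.ne', ode' μ hμ r hr]
      simp only [Pi.mul_apply, Pi.sub_apply, Pi.add_apply, Pi.pow_apply]
      field_simp
      ring
    have hK := my_ftc hR.le KC Kd
      (((continuousOn_const.mul ((cP.mul (cV.mul cVμ)).mul cX)).sub
        (continuousOn_const.mul ((cV.mul cVμ).mul cX))).sub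
        (continuousOn_const.mul ((cV.pow 2).mul cX)))
    have hKR : R^(d₁-1) * (v μ R * vμμr μ R - vr μ R * vμμ μ R) = 0 := by
      rw [hbcR μ hμ, z3]; ring
    have hK0 : (0:ℝ)^(d₁-1) * (v μ 0 * vμμr μ 0 - vr μ 0 * vμμ μ 0) = 0 := by
      rw [hbc0 μ hμ, z4]; ring
    rw [hKR, hK0, sub_zero] at hK
    rw [intervalIntegral.integral_sub (IntervalIntegrable.sub
        (intCC (fun r => 2*(r^(2*s) * (v μ r * vμ μ r) * r^(d₁-1))) (continuousOn_const.mul ((cP.mul (cV.mul cVμ)).mul cX)))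
        (intCC (fun r => 2*E' μ * (v μ r * vμ μ r * r^(d₁-1))) (continuousOn_const.mul ((cV.mul cVμ).mul cX))))
      (intCC (fun r => E'' μ * ((v μ r)^2 * r^(d₁-1))) (continuousOn_const.mul ((cV.pow 2).mul cX))),
      intervalIntegral.integral_sub (intCC (fun r => 2*(r^(2*s) * (v μ r * vμ μ r) * r^(d₁-1))) (continuousOn_const.mul ((cP.mul (cV.mul cVμ)).mul cX)))
        (intCC (fun r => 2*E' μ * (v μ r * vμ μ r * r^(d₁-1))) (continuousOn_const.mul ((cV.mul cVμ).mul cX))),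
      intervalIntegral.integral_const_mul, intervalIntegral.integral_const_mul,
      intervalIntegral.integral_const_mul, Inorm, I1] at hK
    linarith [hK]
  -- virial-type identity
  have J1 : ∫ r in (0:ℝ)..R, r * vr μ r * v μ r * r^(d₁-1) = -((d₁:ℝ)/2) := by
    have ΦC : ContinuousOn (fun r : ℝ => r^d₁ * (v μ r)^2) (Icc 0 R) :=
      ((continuous_pow d₁).continuousOn).mul (cV.pow 2)
    have Φd : ∀ r ∈ Ioo (0:ℝ) R, HasDerivAt (fun r : ℝ => r^d₁ * (v μ r)^2)
        ((d₁:ℝ)*((v μ r)^2 * r^(d₁-1)) + 2*(r * vr μ r * v μ r * r^(d₁-1))) r := by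
      intro r hr
      have hcomb := (hasDerivAt_pow d₁ r).mul ((dV μ hμ r hr).pow 2)
      refine hcomb.congr_deriv ?_
      rw [hpow1 r]
      simp only [Pi.mul_apply, Pi.sub_apply, Pi.add_apply, Pi.pow_apply]
      ring
    have hΦ := my_ftc hR.le ΦC Φd
      ((continuousOn_const.mul ((cV.pow 2).mul cX)).add
        (continuousOn_const.mul (((continuous_id'.continuousOn.mul cVr).mul cV).mul cX)))
    have hΦR : R^d₁ * (v μ R)^2 = 0 := by rw [hbcR μ hμ]; ring
    have hΦ0 : (0:ℝ)^d₁ * (v μ 0)^2 = 0 := by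
      rw [zero_pow (by omega : d₁ ≠ 0)]; ring
    rw [hΦR, hΦ0, sub_zero] at hΦ
    rw [intervalIntegral.integral_add (intCC (fun r => (d₁:ℝ)*((v μ r)^2 * r^(d₁-1))) (continuousOn_const.mul ((cV.pow 2).mul cX)))
      (intCC (fun r => 2*(r * vr μ r * v μ r * r^(d₁-1))) (continuousOn_const.mul (((continuous_id'.continuousOn.mul cVr).mul cV).mul cX))),
      intervalIntegral.integral_const_mul, intervalIntegral.integral_const_mul, Inorm] at hΦ
    linarith [hΦ]
  have J2 : ∫ r in (0:ℝ)..R, r^(2*s) * (r * vr μ r * v μ r) * r^(d₁-1)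
      = -((s + (d₁:ℝ)/2) * E' μ) := by
    have ΨC : ContinuousOn (fun r : ℝ => r^(2*s) * (r^d₁ * (v μ r)^2)) (Icc 0 R) :=
      cP.mul (((continuous_pow d₁).continuousOn).mul (cV.pow 2))
    have Ψd : ∀ r ∈ Ioo (0:ℝ) R, HasDerivAt (fun r : ℝ => r^(2*s) * (r^d₁ * (v μ r)^2))
        ((2*s+(d₁:ℝ))*(r^(2*s) * (v μ r)^2 * r^(d₁-1))
          + 2*(r^(2*s) * (r * vr μ r * v μ r) * r^(d₁-1))) r := by
      intro r hr
      have hcomb := (Real.hasDerivAt_rpow_const (p := 2*s) (Or.inl hr.1.ne')).mul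
        ((hasDerivAt_pow d₁ r).mul ((dV μ hμ r hr).pow 2))
      refine hcomb.congr_deriv ?_
      have hrne : r ≠ 0 := hr.1.ne'
      simp only [Pi.mul_apply, Pi.sub_apply, Pi.add_apply, Pi.pow_apply]
      rw [Real.rpow_sub hr.1, Real.rpow_one, hpow1 r]
      field_simp
      ring
    have hΨ := my_ftc hR.le ΨC Ψd
      ((continuousOn_const.mul ((cP.mul (cV.pow 2)).mul cX)).add
        (continuousOn_const.mul ((cP.mul ((continuous_id'.continuousOn.mul cVr).mul cV)).mul cX)))
    have hΨR : R^(2*s) * (R^d₁ * (v μ R)^2) = 0 := by rw [hbcR μ hμ]; ring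
    have hΨ0 : (0:ℝ)^(2*s) * ((0:ℝ)^d₁ * (v μ 0)^2) = 0 := by
      rw [Real.zero_rpow h2s.ne']; ring
    rw [hΨR, hΨ0, sub_zero] at hΨ
    rw [intervalIntegral.integral_add (intCC (fun r => (2*s+(d₁:ℝ))*(r^(2*s) * (v μ r)^2 * r^(d₁-1))) (continuousOn_const.mul ((cP.mul (cV.pow 2)).mul cX)))
      (intCC (fun r => 2*(r^(2*s) * (r * vr μ r * v μ r) * r^(d₁-1))) (continuousOn_const.mul ((cP.mul ((continuous_id'.continuousOn.mul cVr).mul cV)).mul cX))),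
      intervalIntegral.integral_const_mul, intervalIntegral.integral_const_mul, I2] at hΨ
    linarith [hΨ]
  -- scaled comparison function W and its Wronskian G
  set W : ℝ → ℝ := fun r => 4*(1+s)*(μ * vμ μ r) - (2*(r * vr μ r) + (d₁:ℝ) * v μ r) with hWdef
  set Wr : ℝ → ℝ := fun r => 4*(1+s)*(μ * vμr μ r) - (2*(vr μ r + r * vrr μ r) + (d₁:ℝ) * vr μ r) with hWrdef
  set G : ℝ → ℝ := fun r => r^(d₁-1) * (v μ r * Wr r - vr μ r * W r) with hGdef
  have cW : ContinuousOn W (Icc 0 R) := by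
    rw [hWdef]
    exact (continuousOn_const.mul (continuousOn_const.mul cVμ)).sub
      ((continuousOn_const.mul (continuous_id'.continuousOn.mul cVr)).add
        (continuousOn_const.mul cV))
  have cWr : ContinuousOn Wr (Icc 0 R) := by
    rw [hWrdef]
    exact (continuousOn_const.mul (continuousOn_const.mul cVμr)).sub
      ((continuousOn_const.mul (cVr.add (continuous_id'.continuousOn.mul cVrr))).add
        (continuousOn_const.mul cVr))
  have cG : ContinuousOn G (Icc 0 R) := by
    rw [hGdef]
    exact cX.mul ((cV.mul cWr).sub (cVr.mul cW))
  have dW : ∀ r ∈ Ioo (0:ℝ) R, HasDerivAt W (Wr r) r := by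
    intro r hr
    simp only [hWdef, hWrdef]
    have w1 := ((F1 μ hμ r hr).const_mul μ).const_mul (4*(1+s))
    have w2 := ((hasDerivAt_id' (x := r)).mul (dVr μ hμ r hr)).const_mul (2:ℝ)
    have w3 := w2.add ((dV μ hμ r hr).const_mul ((d₁:ℝ)))
    refine (w1.sub w3).congr_deriv ?_
    ring
  have Gd : ∀ r ∈ Ioo (0:ℝ) R, HasDerivAt G
      (-(4*(1+s)*(μ * E' μ) - 4*E μ) * ((v μ r)^2 * r^(d₁-1))) r := by
    intro r hr
    have w1 := ((F1 μ hμ r hr).const_mul μ).const_mul (4*(1+s))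
    have w2 := ((hasDerivAt_id' (x := r)).mul (dVr μ hμ r hr)).const_mul (2:ℝ)
    have w3 := w2.add ((dV μ hμ r hr).const_mul ((d₁:ℝ)))
    have hdW' := w1.sub w3
    have u1 := ((F2 μ hμ r hr).const_mul μ).const_mul (4*(1+s))
    have u2 := (dVr μ hμ r hr).add ((hasDerivAt_id' (x := r)).mul (dVrr2 r hr))
    have u3 := (u2.const_mul (2:ℝ)).add ((dVr μ hμ r hr).const_mul ((d₁:ℝ)))
    have hdWr' := u1.sub u3
    have hcomb := (hasDerivAt_pow (d₁-1) r).mul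
      (((dV μ hμ r hr).mul hdWr').sub ((dVr μ hμ r hr).mul hdW'))
    simp only [hGdef, hWdef, hWrdef]
    refine hcomb.congr_deriv ?_
    simp only [Pi.mul_apply, Pi.sub_apply, Pi.add_apply, Pi.pow_apply]
    rw [hpow3 r hr.1.ne', ode' μ hμ r hr]
    have hrne : r ≠ 0 := hr.1.ne'
    field_simp
    ring
  have GR : G R = 2*(R^(d₁-1)*R)*(vr μ R)^2 := by
    simp only [hGdef, hWdef, hWrdef]
    rw [hbcR μ hμ, z1 μ hμ]
    ring
  have G0 : G 0 = 0 := by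
    simp only [hGdef, hWdef, hWrdef]
    rw [hbc0 μ hμ, z2 μ hμ]
    ring
  have hGint : ∀ ρ ∈ Icc (0:ℝ) R, G ρ - G 0
      = ∫ r in (0:ℝ)..ρ, -(4*(1+s)*(μ * E' μ) - 4*E μ) * ((v μ r)^2 * r^(d₁-1)) := by
    intro ρ hρ
    have := my_ftc hρ.1 (cG.mono (Icc_subset_Icc le_rfl hρ.2))
      (fun x hx => Gd x ⟨hx.1, lt_of_lt_of_le hx.2 hρ.2⟩)
      ((continuousOn_const.mul ((cV.pow 2).mul cX)).mono (Icc_subset_Icc le_rfl hρ.2))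
    linarith [this]
  have hc2 : 4*(1+s)*(μ * E' μ) - 4*E μ ≤ 0 := by
    have h := hGint R (right_mem_Icc.2 hR.le)
    rw [G0, sub_zero, intervalIntegral.integral_const_mul, Inorm] at h
    have hge : 0 ≤ G R := by
      rw [GR]
      have h1 : (0:ℝ) ≤ R^(d₁-1)*R := mul_nonneg (pow_nonneg hR.le _) hR.le
      nlinarith [sq_nonneg (vr μ R), h1]
    nlinarith [hge, h]
  have Gnn : ∀ ρ ∈ Ioo (0:ℝ) R, 0 ≤ G ρ := by
    intro ρ hρ
    have h := hGint ρ (hIoo hρ)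
    rw [G0, sub_zero] at h
    rw [h]
    apply intervalIntegral.integral_nonneg hρ.1.le
    intro u hu
    have h1 : 0 ≤ (v μ u)^2 * u^(d₁-1) := mul_nonneg (sq_nonneg _) (pow_nonneg hu.1 _)
    nlinarith [hc2, h1]
  -- monotonicity of W/v
  have hmono : MonotoneOn (fun r => W r / v μ r) (Ioo (0:ℝ) R) := by
    have hder : ∀ r ∈ Ioo (0:ℝ) R, HasDerivAt (fun r => W r / v μ r)
        ((Wr r * v μ r - W r * vr μ r)/(v μ r)^2) r := by
      intro r hr
      exact (dW r hr).div (dV μ hμ r hr) (hvpos μ hμ r hr).ne'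
    apply monotoneOn_of_deriv_nonneg (convex_Ioo 0 R)
    · intro r hr
      exact ((hder r hr).continuousAt).continuousWithinAt
    · intro r hr
      rw [interior_Ioo] at hr
      exact (hder r hr).differentiableAt.differentiableWithinAt
    · intro r hr
      rw [interior_Ioo] at hr
      rw [(hder r hr).deriv]
      apply div_nonneg _ (sq_nonneg _)
      have hX : (0:ℝ) < r^(d₁-1) := pow_pos hr.1 _
      have hg := Gnn r hr
      have hGr : G r = r^(d₁-1) * (v μ r * Wr r - vr μ r * W r) := by simp only [hGdef]
      nlinarith [hg, hX, hGr]
  obtain ⟨c0, hc00, hcheb⟩ := cheb (b := R) (p := 2*s) h2s (hvpos μ hμ) hmono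
  -- the final integral inequality
  have iA : IntervalIntegrable (fun r => r^(2*s) * (v μ r * W r) * r^(d₁-1)) volume 0 R :=
    intCC _ ((cP.mul (cV.mul cW)).mul cX)
  have iB : IntervalIntegrable (fun r => c0^(2*s) * (v μ r * W r * r^(d₁-1))) volume 0 R :=
    intCC _ (continuousOn_const.mul ((cV.mul cW).mul cX))
  have Ifin : 0 ≤ ∫ r in (0:ℝ)..R, (r^(2*s) - c0^(2*s)) * (v μ r * W r) * r^(d₁-1) := by
    apply intervalIntegral.integral_nonneg_of_ae_restrict hR.le
    have h0 : ∀ᵐ (x:ℝ) ∂volume, x ≠ 0 := by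
      refine MeasureTheory.ae_iff.2 ?_
      simp only [ne_eq, not_not]
      have hset : {a : ℝ | a = 0} = {(0:ℝ)} := by ext x; simp
      rw [hset]
      exact Real.volume_singleton
    rw [Filter.EventuallyLE, ae_restrict_iff' measurableSet_Icc]
    filter_upwards [h0] with x hx hxI
    simp only [Pi.zero_apply]
    rcases eq_or_lt_of_le hxI.2 with hxR | hxR
    · rw [hxR, hbcR μ hμ]
      simp
    · have hxIoo : x ∈ Ioo (0:ℝ) R := ⟨lt_of_le_of_ne hxI.1 (Ne.symm hx), hxR⟩
      exact mul_nonneg (hcheb x hxIoo) (pow_nonneg hxI.1 _)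
  have IW0 : ∫ r in (0:ℝ)..R, v μ r * W r * r^(d₁-1) = 0 := by
    have hexp : (fun r => v μ r * W r * r^(d₁-1))
        = fun r => 4*(1+s)*(μ*(v μ r * vμ μ r * r^(d₁-1)))
          - 2*(r * vr μ r * v μ r * r^(d₁-1)) - (d₁:ℝ)*((v μ r)^2 * r^(d₁-1)) := by
      funext r
      simp only [hWdef]
      ring
    have ig1 : IntervalIntegrable (fun r => 4*(1+s)*(μ*(v μ r * vμ μ r * r^(d₁-1)))) volume 0 R :=
      intCC _ (continuousOn_const.mul (continuousOn_const.mul ((cV.mul cVμ).mul cX)))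
    have ig2 : IntervalIntegrable (fun r => 2*(r * vr μ r * v μ r * r^(d₁-1))) volume 0 R :=
      intCC _ (continuousOn_const.mul (((continuous_id'.continuousOn.mul cVr).mul cV).mul cX))
    have ig3 : IntervalIntegrable (fun r => (d₁:ℝ)*((v μ r)^2 * r^(d₁-1))) volume 0 R :=
      intCC _ (continuousOn_const.mul ((cV.pow 2).mul cX))
    rw [hexp, intervalIntegral.integral_sub (ig1.sub ig2) ig3,
      intervalIntegral.integral_sub ig1 ig2]
    simp only [intervalIntegral.integral_const_mul]
    rw [I1, J1, Inorm]
    ring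
  have IPW : ∫ r in (0:ℝ)..R, r^(2*s) * (v μ r * W r) * r^(d₁-1)
      = 2*(1+s)*(μ*E'' μ) + 2*(s*E' μ) := by
    have hexp : (fun r => r^(2*s) * (v μ r * W r) * r^(d₁-1))
        = fun r => 4*(1+s)*(μ*(r^(2*s) * (v μ r * vμ μ r) * r^(d₁-1)))
          - 2*(r^(2*s) * (r * vr μ r * v μ r) * r^(d₁-1))
          - (d₁:ℝ)*(r^(2*s) * (v μ r)^2 * r^(d₁-1)) := by
      funext r
      simp only [hWdef]
      ring
    have ig1 : IntervalIntegrable (fun r => 4*(1+s)*(μ*(r^(2*s) * (v μ r * vμ μ r) * r^(d₁-1)))) volume 0 R :=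
      intCC _ (continuousOn_const.mul (continuousOn_const.mul ((cP.mul (cV.mul cVμ)).mul cX)))
    have ig2 : IntervalIntegrable (fun r => 2*(r^(2*s) * (r * vr μ r * v μ r) * r^(d₁-1))) volume 0 R :=
      intCC _ (continuousOn_const.mul ((cP.mul ((continuous_id'.continuousOn.mul cVr).mul cV)).mul cX))
    have ig3 : IntervalIntegrable (fun r => (d₁:ℝ)*(r^(2*s) * (v μ r)^2 * r^(d₁-1))) volume 0 R :=
      intCC _ (continuousOn_const.mul ((cP.mul (cV.pow 2)).mul cX))
    rw [hexp, intervalIntegral.integral_sub (ig1.sub ig2) ig3,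
      intervalIntegral.integral_sub ig1 ig2]
    simp only [intervalIntegral.integral_const_mul]
    rw [I3, J2, I2]
    ring
  have hsplit : ∫ r in (0:ℝ)..R, (r^(2*s) - c0^(2*s)) * (v μ r * W r) * r^(d₁-1)
      = (∫ r in (0:ℝ)..R, r^(2*s) * (v μ r * W r) * r^(d₁-1))
        - c0^(2*s) * ∫ r in (0:ℝ)..R, v μ r * W r * r^(d₁-1) := by
    have hexp : (fun r => (r^(2*s) - c0^(2*s)) * (v μ r * W r) * r^(d₁-1))
        = fun r => r^(2*s) * (v μ r * W r) * r^(d₁-1)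
          - c0^(2*s) * (v μ r * W r * r^(d₁-1)) := by
      funext r
      ring
    rw [hexp, intervalIntegral.integral_sub iA iB, intervalIntegral.integral_const_mul]
  rw [hsplit, IW0, IPW, mul_zero, sub_zero] at Ifin
  nlinarith [Ifin]
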